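/- arXiv:0809.3011 — 3 statements merged into one kernel-verified Lean document; each statement's English description precedes it below -/
import Mathlib

section
/- (Theorem 2, lower Shimogaki index) Let ψ ∈ Ψ(a,b) and G = G(ψ; a,b), with fundamental function φ(s) = sup_{p ∈ (a,b)} s^{1/p}/ψ(p) and dilation function M_G(t) = sup_{s>0} φ(st)/φ(s). Then the lower Shimogaki index β⁻(G) = lim_{t→0⁺} (log M_G(t))/(log t) exists and equals 1/b; in particular β⁻(G) = 1/b < 1/a = β⁺(G). -/
noncomputable section

open MeasureTheory Filter Set Topology
open scoped ENNReal NNReal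

/-- The set of exponents `p` with `a < p < b` (where `b : ℝ≥0∞` may be `∞`). -/
def expSet (a : ℝ) (b : ℝ≥0∞) : Set ℝ := {p : ℝ | a < p ∧ ENNReal.ofReal p < b}

/-- The filter of real exponents `p` tending to `b` from below (`p → b⁻`);
when `b = ∞` this amounts to `p → ∞`. -/
def atBbelow (b : ℝ≥0∞) : Filter ℝ :=
  Filter.comap ENNReal.ofReal (nhdsWithin b (Set.Iio b))

/-- The class `EΨ(a,b)`: continuous `ψ` on `(a,b)` with `ψ(p) ≥ 1` and `ψ(b-0) = ∞`. -/
def IsEPsi (a : ℝ) (b : ℝ≥0∞) (ψ : ℝ → ℝ) : Prop :=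
  ContinuousOn ψ (expSet a b) ∧ (∀ p ∈ expSet a b, 1 ≤ ψ p) ∧
    Filter.Tendsto ψ (atBbelow b) Filter.atTop

/-- Norm of the Bilateral Grand Lebesgue space `G(ψ; a, b)` over a measure `μ`:
`‖f‖_{G(ψ)} = sup_{p ∈ (a,b)} ‖f‖_{L^p(μ)} / ψ(p)`, with values in `ℝ≥0∞`. -/
def GNorm {α : Type*} [MeasurableSpace α] (μ : Measure α) (a : ℝ) (b : ℝ≥0∞)
    (ψ : ℝ → ℝ) (f : α → ℝ) : ℝ≥0∞ :=
  ⨆ p ∈ expSet a b, eLpNorm f (ENNReal.ofReal p) μ / ENNReal.ofReal (ψ p)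

/-- The class `Ψ(a,b)` (relative to a measure `μ`): positive continuous `ψ` on `(a,b)`
with `ψ(b-0) = ∞`, admitting a representation `ψ(p) = ‖f‖_{L^p(μ)}` for `p ∈ (a,b)`, where
the measurable `f` lies in `L^p(μ)` for all `p ∈ (a,b)`. -/
def IsPsi {α : Type*} [MeasurableSpace α] (μ : Measure α) (a : ℝ) (b : ℝ≥0∞)
    (ψ : ℝ → ℝ) : Prop :=
  ContinuousOn ψ (expSet a b) ∧ (∀ p ∈ expSet a b, 0 < ψ p) ∧
    Filter.Tendsto ψ (atBbelow b) Filter.atTop ∧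
    ∃ f : α → ℝ, AEStronglyMeasurable f μ ∧
      ∀ p ∈ expSet a b, eLpNorm f (ENNReal.ofReal p) μ = ENNReal.ofReal (ψ p)

/-- The fundamental function `φ(G(ψ;a,b), s) = sup_{p ∈ (a,b)} s^{1/p}/ψ(p)`, real-valued. -/
def fundR (a : ℝ) (b : ℝ≥0∞) (ψ : ℝ → ℝ) (s : ℝ) : ℝ :=
  ⨆ p : expSet a b, s ^ (1 / (p : ℝ)) / ψ p

/-- The fundamental function `φ(G(ψ;a,b), δ) = sup_{p ∈ (a,b)} δ^{1/p}/ψ(p)`, `ℝ≥0∞`-valued. -/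
def fundE (a : ℝ) (b : ℝ≥0∞) (ψ : ℝ → ℝ) (δ : ℝ≥0∞) : ℝ≥0∞ :=
  ⨆ p ∈ expSet a b, δ ^ (1 / p) / ENNReal.ofReal (ψ p)

/-- The dilation function `M_G(t) = sup_{s > 0} φ(st)/φ(s)` built from the fundamental
function `φ(s) = sup_{p ∈ (a,b)} s^{1/p}/ψ(p)` of `G(ψ; a,b)`. -/
def MG (a : ℝ) (b : ℝ≥0∞) (ψ : ℝ → ℝ) (t : ℝ) : ℝ :=
  ⨆ s : Set.Ioi (0 : ℝ), fundR a b ψ ((s : ℝ) * t) / fundR a b ψ (s : ℝ)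


section Aux

variable {a : ℝ} {b : ℝ≥0∞} {ψ : ℝ → ℝ}

lemma expSet_pos (ha : 1 ≤ a) {p : ℝ} (hp : p ∈ expSet a b) : 0 < p := by
  have := hp.1; linarith

lemma expSet_nonempty (ha : 1 ≤ a) (hab : ENNReal.ofReal a < b) : (expSet a b).Nonempty := by
  rcases eq_or_ne b ⊤ with rfl | hb
  · exact ⟨a + 1, ⟨by linarith, by simp⟩⟩
  · have haB : a < b.toReal := (ENNReal.ofReal_lt_iff_lt_toReal (by linarith) hb).mp hab
    exact ⟨(a + b.toReal) / 2, ⟨by linarith,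
      by rw [ENNReal.ofReal_lt_iff_lt_toReal (by linarith) hb]; linarith⟩⟩

/-- `β := (b.toReal)⁻¹ ≤ 1/p` for `p ∈ (a,b)`. -/
lemma beta_le (ha : 1 ≤ a) {p : ℝ} (hp : p ∈ expSet a b) : (b.toReal)⁻¹ ≤ 1 / p := by
  have hp0 : 0 < p := expSet_pos ha hp
  rcases eq_or_ne b ⊤ with rfl | hb
  · simp only [ENNReal.toReal_top, inv_zero]
    exact le_of_lt (one_div_pos.mpr hp0)
  · have hpB : p < b.toReal := by
      rw [← ENNReal.ofReal_lt_iff_lt_toReal (le_of_lt hp0) hb]; exact hp.2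
    rw [one_div]
    exact inv_anti₀ hp0 (le_of_lt hpB)

lemma one_div_le_alpha (ha : 1 ≤ a) {p : ℝ} (hp : p ∈ expSet a b) : 1 / p ≤ 1 / a := by
  have := hp.1
  exact one_div_le_one_div_of_le (by linarith) (le_of_lt this)

end Aux

section Lower

variable {a : ℝ} {b : ℝ≥0∞} {ψ : ℝ → ℝ}

/-- Positivity: `ψ` admitting an `L^p`-norm representation is bounded below by a positive
constant on the exponent interval. -/
lemma psi_lower {α : Type*} [MeasurableSpace α] {μ : Measure α}
    (ha : 1 ≤ a) (hab : ENNReal.ofReal a < b) (hψ : IsPsi μ a b ψ) :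
    ∃ m : ℝ, 0 < m ∧ ∀ p ∈ expSet a b, m ≤ ψ p := by
  obtain ⟨-, hpos, -, f, hf, hfn⟩ := hψ
  set g : α → ℝ := hf.mk f with hgdef
  have hg : StronglyMeasurable g := hf.stronglyMeasurable_mk
  have hfg : f =ᵐ[μ] g := hf.ae_eq_mk
  have hgn : ∀ p ∈ expSet a b, eLpNorm g (ENNReal.ofReal p) μ = ENNReal.ofReal (ψ p) := by
    intro p hp
    rw [← eLpNorm_congr_ae hfg]; exact hfn p hp
  obtain ⟨p₀, hp₀⟩ := expSet_nonempty ha hab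
  have hp₀pos : 0 < p₀ := expSet_pos ha hp₀
  have hq₀ : (ENNReal.ofReal p₀) ≠ 0 := by
    simp [ENNReal.ofReal_eq_zero, not_le, hp₀pos]
  -- g is not a.e. zero
  have hne : ¬ (g =ᵐ[μ] 0) := by
    intro h
    have : eLpNorm g (ENNReal.ofReal p₀) μ = 0 := by
      rw [eLpNorm_congr_ae h, eLpNorm_zero]
    rw [hgn p₀ hp₀] at this
    have := hpos p₀ hp₀
    simp [ENNReal.ofReal_eq_zero] at *
    linarith
  have hne' : μ {x | g x ≠ 0} ≠ 0 := by
    intro h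
    exact hne (by rwa [Filter.EventuallyEq, ae_iff])
  -- find a level set with positive measure
  have hcover : {x | g x ≠ 0} ⊆ ⋃ n : ℕ, {x | 1 / ((n : ℝ) + 1) ≤ |g x|} := by
    intro x hx
    obtain ⟨n, hn⟩ := exists_nat_one_div_lt (abs_pos.mpr hx)
    exact Set.mem_iUnion.mpr ⟨n, le_of_lt hn⟩
  obtain ⟨n, hn⟩ : ∃ n : ℕ, μ {x | 1 / ((n : ℝ) + 1) ≤ |g x|} ≠ 0 := by
    by_contra h
    push_neg at h
    apply hne'
    refine le_antisymm ?_ (zero_le)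
    calc μ {x | g x ≠ 0} ≤ μ (⋃ n : ℕ, {x | 1 / ((n : ℝ) + 1) ≤ |g x|}) := measure_mono hcover
      _ ≤ ∑' n : ℕ, μ {x | 1 / ((n : ℝ) + 1) ≤ |g x|} := measure_iUnion_le _
      _ = 0 := by simp only [one_div] at h ⊢; simp [h]
  set c : ℝ := 1 / ((n : ℝ) + 1) with hc
  have hc0 : 0 < c := by positivity
  set A : Set α := {x | c ≤ |g x|} with hA
  have hAm : MeasurableSet A := measurableSet_le measurable_const hg.measurable.abs
  -- indicator bound
  have hind : ∀ p ∈ expSet a b,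
      ENNReal.ofReal c * μ A ^ (1 / p) ≤ ENNReal.ofReal (ψ p) := by
    intro p hp
    have hppos : 0 < p := expSet_pos ha hp
    have hq0 : (ENNReal.ofReal p) ≠ 0 := by simp [ENNReal.ofReal_eq_zero, not_le, hppos]
    have := eLpNorm_indicator_const (μ := μ) (c := c) hAm hq0 ENNReal.ofReal_ne_top
    have hle : eLpNorm (A.indicator fun _ => c) (ENNReal.ofReal p) μ
        ≤ eLpNorm g (ENNReal.ofReal p) μ := by
      apply eLpNorm_mono
      intro x
      by_cases hx : x ∈ A
      · rw [Set.indicator_of_mem hx]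
        simp only [Real.norm_eq_abs, abs_of_pos hc0]
        exact hx
      · simp [Set.indicator_of_notMem hx]
    rw [this, hgn p hp] at hle
    have hnn : ‖c‖ₑ = ENNReal.ofReal c := by
      rw [Real.enorm_eq_ofReal (le_of_lt hc0)]
    rw [hnn, ENNReal.toReal_ofReal (le_of_lt hppos)] at hle
    exact hle
  -- μ A is finite
  have hAfin : μ A ≠ ⊤ := by
    intro htop
    have := hind p₀ hp₀
    rw [htop, ENNReal.top_rpow_of_pos (by positivity)] at this
    simp [ENNReal.mul_top, ENNReal.ofReal_eq_zero, not_le, hc0] at this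
  -- lower bound
  set k : ℝ≥0∞ := min 1 (μ A ^ (1 / a)) with hk
  have hk0 : k ≠ 0 :=
    (lt_min one_pos (ENNReal.rpow_pos (by simpa [pos_iff_ne_zero] using hn) hAfin)).ne'
  have hktop : k ≠ ⊤ := (min_le_left _ _).trans_lt ENNReal.one_lt_top |>.ne
  refine ⟨(ENNReal.ofReal c * k).toReal, ?_, ?_⟩
  · apply ENNReal.toReal_pos
    · simp [mul_eq_zero, ENNReal.ofReal_eq_zero, not_le, hc0, hk0]
    · exact ENNReal.mul_ne_top ENNReal.ofReal_ne_top hktop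
  · intro p hp
    have hppos : 0 < p := expSet_pos ha hp
    have hkey : ENNReal.ofReal c * k ≤ ENNReal.ofReal (ψ p) := by
      refine le_trans ?_ (hind p hp)
      apply mul_le_mul_right
      rcases le_total (μ A) 1 with h1 | h1
      · refine (min_le_right _ _).trans ?_
        exact ENNReal.rpow_le_rpow_of_exponent_ge h1 (one_div_le_alpha ha hp)
      · refine (min_le_left _ _).trans ?_
        calc (1 : ℝ≥0∞) = 1 ^ (1/p) := by rw [ENNReal.one_rpow]
          _ ≤ μ A ^ (1/p) := ENNReal.rpow_le_rpow h1 (by positivity)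
    calc (ENNReal.ofReal c * k).toReal ≤ (ENNReal.ofReal (ψ p)).toReal :=
          ENNReal.toReal_mono ENNReal.ofReal_ne_top hkey
      _ = ψ p := ENNReal.toReal_ofReal (le_of_lt (hpos p hp))

end Lower

section Fund

variable {a : ℝ} {b : ℝ≥0∞} {ψ : ℝ → ℝ} {m : ℝ}

lemma rpow_le_max {s x : ℝ} (hs : 0 < s) (h1 : (b.toReal)⁻¹ ≤ x) (h2 : x ≤ 1/a) :
    s ^ x ≤ max (s ^ (b.toReal)⁻¹) (s ^ (1/a)) := by
  rcases le_total s 1 with h | h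
  · exact le_max_of_le_left (Real.rpow_le_rpow_of_exponent_ge hs h h1)
  · exact le_max_of_le_right (Real.rpow_le_rpow_of_exponent_le h h2)

lemma fund_term_le (ha : 1 ≤ a) (hm0 : 0 < m) (hm : ∀ p ∈ expSet a b, m ≤ ψ p)
    {s : ℝ} (hs : 0 < s) {p : ℝ} (hp : p ∈ expSet a b) :
    s ^ (1 / p) / ψ p ≤ max (s ^ (b.toReal)⁻¹) (s ^ (1/a)) / m := by
  apply div_le_div₀ (by positivity) ?_ hm0 (hm p hp)
  exact rpow_le_max hs (beta_le ha hp) (one_div_le_alpha ha hp)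

lemma fund_bddAbove (ha : 1 ≤ a) (hm0 : 0 < m) (hm : ∀ p ∈ expSet a b, m ≤ ψ p)
    {s : ℝ} (hs : 0 < s) :
    BddAbove (Set.range fun p : expSet a b => s ^ (1 / (p : ℝ)) / ψ p) := by
  refine ⟨max (s ^ (b.toReal)⁻¹) (s ^ (1/a)) / m, ?_⟩
  rintro x ⟨⟨p, hp⟩, rfl⟩
  exact fund_term_le ha hm0 hm hs hp

lemma le_fund (ha : 1 ≤ a) (hm0 : 0 < m) (hm : ∀ p ∈ expSet a b, m ≤ ψ p)
    {s : ℝ} (hs : 0 < s) {p : ℝ} (hp : p ∈ expSet a b) :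
    s ^ (1 / p) / ψ p ≤ fundR a b ψ s :=
  le_ciSup (fund_bddAbove ha hm0 hm hs) (⟨p, hp⟩ : expSet a b)

lemma fund_le (ha : 1 ≤ a) (hab : ENNReal.ofReal a < b) {B : ℝ}
    (hB : ∀ p ∈ expSet a b, s ^ (1 / p) / ψ p ≤ B) : fundR a b ψ s ≤ B := by
  haveI : Nonempty (expSet a b) := (expSet_nonempty ha hab).to_subtype
  exact ciSup_le fun ⟨p, hp⟩ => hB p hp

lemma fund_pos (ha : 1 ≤ a) (hab : ENNReal.ofReal a < b) (hm0 : 0 < m)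
    (hm : ∀ p ∈ expSet a b, m ≤ ψ p) {s : ℝ} (hs : 0 < s) : 0 < fundR a b ψ s := by
  obtain ⟨p, hp⟩ := expSet_nonempty ha hab
  refine lt_of_lt_of_le ?_ (le_fund ha hm0 hm hs hp)
  exact div_pos (Real.rpow_pos_of_pos hs (1 / p)) (lt_of_lt_of_le hm0 (hm p hp))

/-- Multiplicative bound: if `t^(1/p) ≤ T` for all admissible `p`, then
`fundR (s*t) ≤ T * fundR s`. -/
lemma fund_mul_le (ha : 1 ≤ a) (hab : ENNReal.ofReal a < b) (hm0 : 0 < m)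
    (hm : ∀ p ∈ expSet a b, m ≤ ψ p) {s t T : ℝ} (hs : 0 < s) (ht : 0 < t)
    (hT : ∀ p ∈ expSet a b, t ^ (1 / p) ≤ T) :
    fundR a b ψ (s * t) ≤ T * fundR a b ψ s := by
  apply fund_le ha hab
  intro p hp
  have hppos : 0 < p := expSet_pos ha hp
  have hψp : 0 < ψ p := lt_of_lt_of_le hm0 (hm p hp)
  have hsplit : (s * t) ^ (1 / p) / ψ p = t ^ (1 / p) * (s ^ (1 / p) / ψ p) := by
    rw [Real.mul_rpow (le_of_lt hs) (le_of_lt ht)]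
    ring
  rw [hsplit]
  have hT0 : 0 ≤ T := le_trans (le_of_lt (Real.rpow_pos_of_pos ht _)) (hT p hp)
  exact mul_le_mul (hT p hp) (le_fund ha hm0 hm hs hp)
    (by positivity) hT0

end Fund

section MGsec

variable {a : ℝ} {b : ℝ≥0∞} {ψ : ℝ → ℝ} {m : ℝ}

lemma MG_bddAbove (ha : 1 ≤ a) (hab : ENNReal.ofReal a < b) (hm0 : 0 < m)
    (hm : ∀ p ∈ expSet a b, m ≤ ψ p) {t : ℝ} (ht : 0 < t) :
    BddAbove (Set.range fun s : Set.Ioi (0:ℝ) =>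
      fundR a b ψ ((s : ℝ) * t) / fundR a b ψ (s : ℝ)) := by
  refine ⟨max (t ^ (b.toReal)⁻¹) (t ^ (1/a)), ?_⟩
  rintro x ⟨⟨s, hs⟩, rfl⟩
  have hs' : (0:ℝ) < s := hs
  rw [div_le_iff₀ (fund_pos ha hab hm0 hm hs')]
  exact fund_mul_le ha hab hm0 hm hs' ht
    (fun p hp => rpow_le_max ht (beta_le ha hp) (one_div_le_alpha ha hp))

lemma le_MG (ha : 1 ≤ a) (hab : ENNReal.ofReal a < b) (hm0 : 0 < m)
    (hm : ∀ p ∈ expSet a b, m ≤ ψ p) {t s : ℝ} (ht : 0 < t) (hs : 0 < s) :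
    fundR a b ψ (s * t) / fundR a b ψ s ≤ MG a b ψ t :=
  le_ciSup (MG_bddAbove ha hab hm0 hm ht) (⟨s, hs⟩ : Set.Ioi (0:ℝ))

lemma MG_le (ha : 1 ≤ a) (hab : ENNReal.ofReal a < b) (hm0 : 0 < m)
    (hm : ∀ p ∈ expSet a b, m ≤ ψ p) {t T : ℝ} (ht : 0 < t)
    (hT : ∀ p ∈ expSet a b, t ^ (1 / p) ≤ T) : MG a b ψ t ≤ T := by
  haveI : Nonempty (Set.Ioi (0:ℝ)) := ⟨⟨1, by norm_num⟩⟩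
  apply ciSup_le
  rintro ⟨s, hs⟩
  have hs' : (0:ℝ) < s := hs
  rw [div_le_iff₀ (fund_pos ha hab hm0 hm hs')]
  exact fund_mul_le ha hab hm0 hm hs' ht hT

lemma MG_pos (ha : 1 ≤ a) (hab : ENNReal.ofReal a < b) (hm0 : 0 < m)
    (hm : ∀ p ∈ expSet a b, m ≤ ψ p) {t : ℝ} (ht : 0 < t) : 0 < MG a b ψ t := by
  refine lt_of_lt_of_le ?_ (le_MG ha hab hm0 hm ht one_pos)
  exact div_pos (fund_pos ha hab hm0 hm (by linarith : (0:ℝ) < 1 * t))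
    (fund_pos ha hab hm0 hm one_pos)

lemma fund_pow_le (ha : 1 ≤ a) (hab : ENNReal.ofReal a < b) (hm0 : 0 < m)
    (hm : ∀ p ∈ expSet a b, m ≤ ψ p) {t : ℝ} (ht : 0 < t) (n : ℕ) :
    fundR a b ψ (t ^ n) ≤ (MG a b ψ t) ^ n * fundR a b ψ 1 := by
  induction n with
  | zero => simp
  | succ n ih =>
    have hstep : fundR a b ψ (t ^ n * t) ≤ MG a b ψ t * fundR a b ψ (t ^ n) := by
      rw [← div_le_iff₀ (fund_pos ha hab hm0 hm (pow_pos ht n))]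
      exact le_MG ha hab hm0 hm ht (pow_pos ht n)
    calc fundR a b ψ (t ^ (n+1)) = fundR a b ψ (t ^ n * t) := by rw [pow_succ]
      _ ≤ MG a b ψ t * fundR a b ψ (t ^ n) := hstep
      _ ≤ MG a b ψ t * ((MG a b ψ t) ^ n * fundR a b ψ 1) :=
          mul_le_mul_of_nonneg_left ih (le_of_lt (MG_pos ha hab hm0 hm ht))
      _ = (MG a b ψ t) ^ (n+1) * fundR a b ψ 1 := by ring

lemma log_MG_ge (ha : 1 ≤ a) (hab : ENNReal.ofReal a < b) (hm0 : 0 < m)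
    (hm : ∀ p ∈ expSet a b, m ≤ ψ p) {t p : ℝ} (ht : 0 < t) (hp : p ∈ expSet a b) :
    Real.log t / p ≤ Real.log (MG a b ψ t) := by
  have hppos : 0 < p := expSet_pos ha hp
  have hψp : 0 < ψ p := lt_of_lt_of_le hm0 (hm p hp)
  have hMG : 0 < MG a b ψ t := MG_pos ha hab hm0 hm ht
  have hf1 : 0 < fundR a b ψ 1 := fund_pos ha hab hm0 hm one_pos
  set L : ℝ := Real.log (MG a b ψ t) with hL
  set C : ℝ := Real.log (fundR a b ψ 1) + Real.log (ψ p) with hC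
  have key : ∀ n : ℕ, (n : ℝ) * (Real.log t / p) ≤ (n : ℝ) * L + C := by
    intro n
    have htn : 0 < t ^ n := pow_pos ht n
    have h1 : (t ^ n) ^ (1 / p) / ψ p ≤ (MG a b ψ t) ^ n * fundR a b ψ 1 :=
      le_trans (le_fund ha hm0 hm htn hp) (fund_pow_le ha hab hm0 hm ht n)
    have hlhs : 0 < (t ^ n) ^ (1 / p) / ψ p :=
      div_pos (Real.rpow_pos_of_pos htn _) hψp
    have hlog := Real.log_le_log hlhs h1
    rw [Real.log_div (ne_of_gt (Real.rpow_pos_of_pos htn _)) (ne_of_gt hψp),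
      Real.log_rpow htn, Real.log_pow,
      Real.log_mul (ne_of_gt (pow_pos hMG n)) (ne_of_gt hf1), Real.log_pow] at hlog
    have : (1 / p) * ((n : ℝ) * Real.log t) = (n : ℝ) * (Real.log t / p) := by
      field_simp
    rw [hC]
    nlinarith [hlog]
  refine ge_of_tendsto (x := (Filter.atTop : Filter ℕ)) (f := fun n : ℕ => L + C / n) ?_ ?_
  · have h0 : Filter.Tendsto (fun n : ℕ => C / n) Filter.atTop (𝓝 0) :=
      Filter.Tendsto.div_atTop tendsto_const_nhds tendsto_natCast_atTop_atTop
    simpa using tendsto_const_nhds.add h0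
  · filter_upwards [Filter.eventually_ge_atTop 1] with n hn
    have hn' : (0:ℝ) < n := by exact_mod_cast hn
    have := key n
    rw [← sub_nonneg]
    have h2 : L + C / n - Real.log t / p = ((n:ℝ) * L + C - (n:ℝ) * (Real.log t / p)) / n := by
      field_simp
    rw [h2]
    apply div_nonneg _ (le_of_lt hn')
    linarith

end MGsec

section Density

variable {a : ℝ} {b : ℝ≥0∞}

lemma exists_p_near_b (ha : 1 ≤ a) (hab : ENNReal.ofReal a < b) {ε : ℝ} (hε : 0 < ε) :
    ∃ p ∈ expSet a b, 1 / p < (b.toReal)⁻¹ + ε := by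
  rcases eq_or_ne b ⊤ with rfl | hb
  · refine ⟨max (a + 1) (1/ε + 1), ⟨?_, by simp⟩, ?_⟩
    · exact lt_of_lt_of_le (by linarith) (le_max_left _ _)
    · have h1 : 1/ε < max (a + 1) (1/ε + 1) :=
        lt_of_lt_of_le (by linarith) (le_max_right _ _)
      have h2 : (0:ℝ) < max (a + 1) (1/ε + 1) := lt_trans (by positivity) h1
      simp only [ENNReal.toReal_top, inv_zero, zero_add]
      rw [div_lt_iff₀ h2, ← div_lt_iff₀' hε]
      exact h1
  · have haB : a < b.toReal := (ENNReal.ofReal_lt_iff_lt_toReal (by linarith) hb).mp hab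
    set B := b.toReal with hB
    have hB0 : 0 < B := by linarith
    set B' : ℝ := (1/B + ε)⁻¹ with hB'
    have hB'0 : 0 < B' := by positivity
    have hB'B : B' < B := by
      have h3 : (1/B + ε)⁻¹ < (1/B)⁻¹ :=
        inv_strictAnti₀ (by positivity) (by linarith)
      rw [hB']
      calc (1/B + ε)⁻¹ < (1/B)⁻¹ := h3
        _ = B := by rw [one_div, inv_inv]
    set p : ℝ := (max a B' + B) / 2 with hpdef
    have hmax : max a B' < B := max_lt haB hB'B
    have hap : a < p := by
      have := le_max_left a B'
      have := le_max_right a B'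
      rw [hpdef]; rcases max_cases a B' with ⟨h, -⟩ | ⟨h, -⟩ <;> rw [h] <;> linarith
    have hB'p : B' < p := by
      have := le_max_right a B'
      rw [hpdef]; linarith [hmax]
    have hpB : p < B := by rw [hpdef]; linarith [hmax]
    refine ⟨p, ⟨hap, ?_⟩, ?_⟩
    · rw [ENNReal.ofReal_lt_iff_lt_toReal (by linarith) hb]; exact hpB
    · have hp0 : 0 < p := by linarith
      have h4 : 1/p < 1/B' := one_div_lt_one_div_of_lt hB'0 hB'p
      have h5 : 1/B' = B⁻¹ + ε := by rw [hB', one_div, inv_inv, one_div]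
      rw [← h5]
      exact h4

lemma exists_p_near_a (ha : 1 ≤ a) (hab : ENNReal.ofReal a < b) {ε : ℝ} (hε : 0 < ε) :
    ∃ p ∈ expSet a b, 1 / a - ε < 1 / p := by
  obtain ⟨p₁, hp₁⟩ := expSet_nonempty ha hab
  rcases le_or_gt (1/a - ε) 0 with h | h
  · exact ⟨p₁, hp₁, lt_of_le_of_lt h (one_div_pos.mpr (expSet_pos ha hp₁))⟩
  · have ha0 : 0 < a := by linarith
    have hlt : a < (1/a - ε)⁻¹ := by
      have h1 : (1/a)⁻¹ < (1/a - ε)⁻¹ := inv_strictAnti₀ h (by linarith)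
      simp only [one_div, inv_inv] at h1 ⊢
      exact h1
    set p : ℝ := min p₁ ((a + (1/a - ε)⁻¹) / 2) with hpdef
    have hp1 : a < p := lt_min hp₁.1 (by linarith [hlt])
    have hp2 : p < (1/a - ε)⁻¹ := by
      refine lt_of_le_of_lt (min_le_right _ _) ?_
      linarith [hlt]
    refine ⟨p, ⟨hp1, lt_of_le_of_lt (ENNReal.ofReal_le_ofReal (min_le_left _ _)) hp₁.2⟩, ?_⟩
    have hp0 : 0 < p := by linarith
    have := one_div_lt_one_div_of_lt hp0 hp2
    rwa [one_div ((1/a - ε)⁻¹), inv_inv] at this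

end Density

section KeyEq

variable {a : ℝ} {b : ℝ≥0∞} {ψ : ℝ → ℝ} {m : ℝ}

lemma log_MG_eq_low (ha : 1 ≤ a) (hab : ENNReal.ofReal a < b) (hm0 : 0 < m)
    (hm : ∀ p ∈ expSet a b, m ≤ ψ p) {t : ℝ} (ht0 : 0 < t) (ht1 : t < 1) :
    Real.log (MG a b ψ t) = (b.toReal)⁻¹ * Real.log t := by
  set β : ℝ := (b.toReal)⁻¹ with hβ
  have hlogt : Real.log t < 0 := Real.log_neg ht0 ht1
  set L : ℝ := Real.log (MG a b ψ t) with hL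
  apply le_antisymm
  · have h1 : MG a b ψ t ≤ t ^ β :=
      MG_le ha hab hm0 hm ht0
        (fun p hp => Real.rpow_le_rpow_of_exponent_ge ht0 (le_of_lt ht1) (beta_le ha hp))
    calc L ≤ Real.log (t ^ β) := Real.log_le_log (MG_pos ha hab hm0 hm ht0) h1
      _ = β * Real.log t := Real.log_rpow ht0 β
  · have hbound : ∀ ε : ℝ, 0 < ε → (β + ε) * Real.log t ≤ L := by
      intro ε hε
      obtain ⟨p, hp, hpε⟩ := exists_p_near_b ha hab hε
      have h1 : Real.log t / p ≤ L := log_MG_ge ha hab hm0 hm ht0 hp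
      have h2 : (β + ε) * Real.log t ≤ (1/p) * Real.log t :=
        mul_le_mul_of_nonpos_right (le_of_lt hpε) (le_of_lt hlogt)
      have h3 : (1/p) * Real.log t = Real.log t / p := by ring
      linarith
    by_contra hlt
    push_neg at hlt
    set δ : ℝ := (β * Real.log t - L) / (2 * (-Real.log t)) with hδ
    have hδ0 : 0 < δ := div_pos (by linarith) (by linarith)
    have hkey := hbound δ hδ0
    have hc : δ * (2 * (-Real.log t)) = β * Real.log t - L := by
      rw [hδ]
      exact div_mul_cancel₀ _ (by linarith)
    nlinarith [hkey, hc, hlt]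

lemma log_MG_eq_high (ha : 1 ≤ a) (hab : ENNReal.ofReal a < b) (hm0 : 0 < m)
    (hm : ∀ p ∈ expSet a b, m ≤ ψ p) {t : ℝ} (ht1 : 1 < t) :
    Real.log (MG a b ψ t) = (1/a) * Real.log t := by
  have ht0 : (0:ℝ) < t := by linarith
  have hlogt : 0 < Real.log t := Real.log_pos ht1
  set L : ℝ := Real.log (MG a b ψ t) with hL
  apply le_antisymm
  · have h1 : MG a b ψ t ≤ t ^ (1/a) :=
      MG_le ha hab hm0 hm ht0
        (fun p hp => Real.rpow_le_rpow_of_exponent_le (le_of_lt ht1) (one_div_le_alpha ha hp))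
    calc L ≤ Real.log (t ^ (1/a)) := Real.log_le_log (MG_pos ha hab hm0 hm ht0) h1
      _ = (1/a) * Real.log t := Real.log_rpow ht0 (1/a)
  · have hbound : ∀ ε : ℝ, 0 < ε → (1/a - ε) * Real.log t ≤ L := by
      intro ε hε
      obtain ⟨p, hp, hpε⟩ := exists_p_near_a ha hab hε
      have h1 : Real.log t / p ≤ L := log_MG_ge ha hab hm0 hm ht0 hp
      have h2 : (1/a - ε) * Real.log t ≤ (1/p) * Real.log t :=
        mul_le_mul_of_nonneg_right (le_of_lt hpε) (le_of_lt hlogt)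
      have h3 : (1/p) * Real.log t = Real.log t / p := by ring
      linarith
    by_contra hlt
    push_neg at hlt
    set δ : ℝ := ((1/a) * Real.log t - L) / (2 * Real.log t) with hδ
    have hδ0 : 0 < δ := div_pos (by linarith) (by linarith)
    have hkey := hbound δ hδ0
    have hc : δ * (2 * Real.log t) = (1/a) * Real.log t - L := by
      rw [hδ]
      exact div_mul_cancel₀ _ (by linarith)
    nlinarith [hkey, hc, hlt]

end KeyEq

/-- **Theorem 2, lower Shimogaki index.** Let `ψ ∈ Ψ(a,b)` (over `X = ℝ₊`
with Lebesgue measure) and `G = G(ψ; a,b)`. Then the lower Shimogaki index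
`β⁻(G) = lim_{t→0⁺} log M_G(t) / log t` exists and equals `1/b` (which is `0` for `b = ∞`);
in particular `β⁻(G) = 1/b < 1/a = β⁺(G)`. -/
theorem lower_Shimogaki_index
    (a : ℝ) (b : ℝ≥0∞) (ha : 1 ≤ a) (hab : ENNReal.ofReal a < b)
    (ψ : ℝ → ℝ) (hψ : IsPsi (volume.restrict (Set.Ioi (0 : ℝ))) a b ψ) :
    Tendsto (fun t : ℝ => Real.log (MG a b ψ t) / Real.log t)
        (𝓝[>] (0 : ℝ)) (𝓝 (b⁻¹.toReal)) ∧
      b⁻¹.toReal < 1 / a ∧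
      Tendsto (fun t : ℝ => Real.log (MG a b ψ t) / Real.log t) atTop (𝓝 (1 / a)) := by
  obtain ⟨m, hm0, hm⟩ := psi_lower ha hab hψ
  have hβeq : b⁻¹.toReal = (b.toReal)⁻¹ := ENNReal.toReal_inv b
  have ha0 : (0:ℝ) < a := by linarith
  refine ⟨?_, ?_, ?_⟩
  · rw [hβeq]
    have hev : (fun t : ℝ => Real.log (MG a b ψ t) / Real.log t) =ᶠ[𝓝[>] (0:ℝ)]
        (fun _ => (b.toReal)⁻¹) := by
      filter_upwards [Ioo_mem_nhdsGT_of_mem (⟨le_refl (0:ℝ), one_pos⟩ : (0:ℝ) ∈ Ico (0:ℝ) 1)]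
        with t ht
      rw [log_MG_eq_low ha hab hm0 hm ht.1 ht.2, mul_div_assoc,
        div_self (ne_of_lt (Real.log_neg ht.1 ht.2)), mul_one]
    exact Filter.Tendsto.congr' hev.symm tendsto_const_nhds
  · rw [hβeq]
    rcases eq_or_ne b ⊤ with rfl | hb
    · simp only [ENNReal.toReal_top, inv_zero]
      positivity
    · have haB : a < b.toReal := (ENNReal.ofReal_lt_iff_lt_toReal (by linarith) hb).mp hab
      have h1 : 1 / b.toReal < 1 / a := one_div_lt_one_div_of_lt ha0 haB
      rwa [one_div b.toReal] at h1
  · have hev : (fun t : ℝ => Real.log (MG a b ψ t) / Real.log t) =ᶠ[atTop]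
        (fun _ => 1 / a) := by
      filter_upwards [Ioi_mem_atTop (1:ℝ)] with t ht
      rw [log_MG_eq_high ha hab hm0 hm ht, mul_div_assoc,
        div_self (ne_of_gt (Real.log_pos ht)), mul_one]
    exact Filter.Tendsto.congr' hev.symm tendsto_const_nhds
end
end

section
/- (Corollary to Theorem 2, part I) Suppose the weight W on X is not necessarily homogeneous but satisfies K⁺_∞ := sup over positive vectors s with min_j s(j) ≥ 1 and y ∈ X of W(s·y)/(s^θ W(y)) < ∞, where s·y denotes coordinate-wise scaling and s^θ = ∏_r s(r)^{θ(r)}. Let ψ, ζ, ν ∈ EΨ(a,b) with ζ = ψ·ν. Then for every positive vector s with min_j s(j) > 1, ‖σ_s‖(G(ψ) → G(ζ)) ≤ max{(K⁺_∞)^{1/a}, (K⁺_∞)^{1/b}} · φ(G(ν), s^{d+θ}). -/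
noncomputable section

open MeasureTheory Filter Set Topology
open scoped ENNReal NNReal

/-- The space `X = ℝ₊^{d(1)} × ⋯ × ℝ₊^{d(k)}`, modelled as the dependent product
`∀ r : Fin k, (Fin (d r) → ℝ)`; the restriction to the positive orthant is encoded
in the measure `wMeasure` below. -/
abbrev PiX (k : ℕ) (d : Fin k → ℕ) : Type := ∀ r : Fin k, Fin (d r) → ℝ

/-- The positive orthant of `X`. -/
def orthant (k : ℕ) (d : Fin k → ℕ) : Set (PiX k d) := {x | ∀ r i, 0 < x r i}

/-- The weighted measure `μ(V) = ∫_V W(x) dx` on `X = ℝ₊^{d(1)} × ⋯ × ℝ₊^{d(k)}`. -/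
def wMeasure (k : ℕ) (d : Fin k → ℕ) (W : PiX k d → ℝ) : Measure (PiX k d) :=
  (volume.restrict (orthant k d)).withDensity fun x => ENNReal.ofReal (W x)

/-- The dilation operator `(σ_s f)(x) = f(x(d(1))/s(1), …, x(d(k))/s(k))`. -/
def dilate {k : ℕ} {d : Fin k → ℕ} (s : Fin k → ℝ) (f : PiX k d → ℝ) : PiX k d → ℝ :=
  fun x => f fun r i => x r i / s r

/-- `s^e = ∏_{r=1}^k s(r)^{e(r)}`. -/
def sPow {k : ℕ} (s e : Fin k → ℝ) : ℝ := ∏ r, s r ^ e r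

/-- The operator norm `‖σ_s‖(G(ψ) → G(ζ))` of the dilation operator. -/
def dilOpNorm {k : ℕ} {d : Fin k → ℕ} (μ : Measure (PiX k d)) (a : ℝ) (b : ℝ≥0∞)
    (ψ ζ : ℝ → ℝ) (s : Fin k → ℝ) : ℝ≥0∞ :=
  ⨆ f : {f : PiX k d → ℝ // AEStronglyMeasurable f μ},
    GNorm μ a b ζ (dilate s f.1) / GNorm μ a b ψ f.1

lemma measurable_scaleT {k : ℕ} {d : Fin k → ℕ} (s : Fin k → ℝ) :
    Measurable (fun (y : PiX k d) (r : Fin k) (i : Fin (d r)) => s r * y r i) := by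
  refine measurable_pi_lambda _ fun r => measurable_pi_lambda _ fun i => ?_
  exact measurable_const.mul ((measurable_pi_apply i).comp (measurable_pi_apply r))

lemma map_scale_volume {k : ℕ} {d : Fin k → ℕ} (s : Fin k → ℝ) (hs : ∀ r, 0 < s r) :
    ENNReal.ofReal (∏ r, s r ^ d r) •
      Measure.map (fun (y : PiX k d) r i => s r * y r i) volume = volume := by
  have hT : Measurable (fun (y : PiX k d) r i => s r * y r i) := measurable_scaleT s
  have : Measure.pi (fun r => (volume : Measure (Fin (d r) → ℝ)))
      = (ENNReal.ofReal (∏ r, s r ^ d r) •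
        Measure.map (fun (y : PiX k d) r i => s r * y r i) volume) := by
    refine Measure.pi_eq (μ := fun r => (volume : Measure (Fin (d r) → ℝ))) fun A hA => ?_
    have hpre : (fun (y : PiX k d) r i => s r * y r i) ⁻¹' (Set.pi Set.univ A)
        = Set.pi Set.univ (fun r => (s r • ·) ⁻¹' (A r)) := by
      ext y
      simp only [Set.mem_preimage, Set.mem_pi, Set.mem_univ, forall_true_left]
      refine forall_congr' fun r => ?_
      have : (fun i => s r * y r i) = s r • y r := by
        funext i; simp [smul_eq_mul]
      rw [this]
    rw [Measure.smul_apply, Measure.map_apply hT (MeasurableSet.univ_pi hA), hpre]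
    rw [show (volume : Measure (PiX k d)) = Measure.pi (fun r => (volume : Measure (Fin (d r) → ℝ))) from rfl,
      Measure.pi_pi (fun r => (volume : Measure (Fin (d r) → ℝ))) (fun r => (s r • ·) ⁻¹' (A r))]
    have hvol : ∀ r, volume ((fun y : Fin (d r) → ℝ => s r • y) ⁻¹' (A r))
        = ENNReal.ofReal ((s r ^ d r)⁻¹) * volume (A r) := by
      intro r
      rw [← Measure.map_apply (measurable_const_smul _) (hA r),
        Measure.map_addHaar_smul volume (hs r).ne']
      simp only [Measure.smul_apply, smul_eq_mul, Module.finrank_fin_fun,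
        abs_of_nonneg (inv_nonneg.mpr (pow_pos (hs r) (d r)).le)]
    simp_rw [hvol]
    rw [smul_eq_mul, ENNReal.ofReal_prod_of_nonneg (fun r _ => (pow_pos (hs r) (d r)).le),
      Finset.prod_mul_distrib, ← mul_assoc, ← Finset.prod_mul_distrib]
    have : ∀ r ∈ Finset.univ, ENNReal.ofReal (s r ^ d r) * ENNReal.ofReal ((s r ^ d r)⁻¹)
        = 1 := by
      intro r _
      rw [← ENNReal.ofReal_mul (pow_pos (hs r) (d r)).le, mul_inv_cancel₀ (pow_pos (hs r) (d r)).ne',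
        ENNReal.ofReal_one]
    rw [Finset.prod_congr rfl this, Finset.prod_const_one, one_mul]
  rw [← this, ← volume_pi]


lemma lintegral_scale {k : ℕ} {d : Fin k → ℕ} (s : Fin k → ℝ) (hs : ∀ r, 0 < s r)
    (h : PiX k d → ℝ≥0∞) (hh : Measurable h) :
    ∫⁻ x, h x = ENNReal.ofReal (∏ r, s r ^ d r) * ∫⁻ y : PiX k d, h (fun r i => s r * y r i) := by
  have e := map_scale_volume (d := d) s hs
  nth_rewrite 1 [← e]
  rw [lintegral_smul_measure, lintegral_map hh (measurable_scaleT s), smul_eq_mul]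

lemma measurable_scaleTinv {k : ℕ} {d : Fin k → ℕ} (s : Fin k → ℝ) :
    Measurable (fun (x : PiX k d) (r : Fin k) (i : Fin (d r)) => x r i / s r) := by
  refine measurable_pi_lambda _ fun r => measurable_pi_lambda _ fun i => ?_
  exact ((measurable_pi_apply i).comp (measurable_pi_apply r)).div_const _

lemma measurableSet_orthant {k : ℕ} {d : Fin k → ℕ} : MeasurableSet (orthant k d) := by
  have : orthant k d = ⋂ (r : Fin k), ⋂ (i : Fin (d r)), {x : PiX k d | 0 < x r i} := by
    ext x; simp [orthant, Set.mem_iInter]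
  rw [this]
  exact MeasurableSet.iInter fun r => MeasurableSet.iInter fun i =>
    measurableSet_lt measurable_const ((measurable_pi_apply i).comp (measurable_pi_apply r))

lemma wMeasure_eq_lintegral {k : ℕ} {d : Fin k → ℕ} (W : PiX k d → ℝ) (hWmeas : Measurable W)
    {B : Set (PiX k d)} (hB : MeasurableSet B) :
    wMeasure k d W B
      = ∫⁻ x, (B ∩ orthant k d).indicator (fun x => ENNReal.ofReal (W x)) x := by
  rw [wMeasure, withDensity_apply _ hB, Measure.restrict_restrict hB,
    lintegral_indicator (hB.inter measurableSet_orthant)]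

lemma map_dilate_le {k : ℕ} {d : Fin k → ℕ} (θ : Fin k → ℝ)
    (W : PiX k d → ℝ) (hWnn : ∀ x, 0 ≤ W x) (hWmeas : Measurable W)
    (K : ℝ) (hK0 : 0 ≤ K)
    (hK : ∀ s : Fin k → ℝ, (∀ r, 1 ≤ s r) → ∀ y : PiX k d,
      W (fun r i => s r * y r i) ≤ K * (sPow s θ * W y))
    (s : Fin k → ℝ) (hs1 : ∀ r, 1 ≤ s r) :
    (wMeasure k d W).map (fun (x : PiX k d) r i => x r i / s r)
      ≤ ENNReal.ofReal (K * sPow s (fun r => (d r : ℝ) + θ r)) • wMeasure k d W := by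
  have hso : ∀ r, 0 < s r := fun r => lt_of_lt_of_le one_pos (hs1 r)
  have hTinv : Measurable (fun (x : PiX k d) r i => x r i / s r) := measurable_scaleTinv s
  have hsθnn : 0 ≤ sPow s θ :=
    Finset.prod_nonneg fun r _ => (Real.rpow_pos_of_pos (hso r) _).le
  refine Measure.le_iff.mpr fun A hA => ?_
  rw [Measure.map_apply hTinv hA, Measure.smul_apply, smul_eq_mul]
  have hBmeas : MeasurableSet ((fun (x : PiX k d) r i => x r i / s r) ⁻¹' A) := hTinv hA
  rw [wMeasure_eq_lintegral W hWmeas hBmeas, wMeasure_eq_lintegral W hWmeas hA]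
  set g : PiX k d → ℝ≥0∞ :=
    (((fun (x : PiX k d) r i => x r i / s r) ⁻¹' A) ∩ orthant k d).indicator
      (fun x => ENNReal.ofReal (W x)) with hgdef
  have hg : Measurable g :=
    (hWmeas.ennreal_ofReal).indicator (hBmeas.inter measurableSet_orthant)
  rw [lintegral_scale s hso g hg]
  have hgT : ∀ y : PiX k d, g (fun r i => s r * y r i)
      = (A ∩ orthant k d).indicator
          (fun y => ENNReal.ofReal (W (fun r i => s r * y r i))) y := by
    intro y
    have hmem : ((fun r i => s r * y r i) ∈
        ((fun (x : PiX k d) r i => x r i / s r) ⁻¹' A) ∩ orthant k d)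
        ↔ y ∈ A ∩ orthant k d := by
      have h1 : (fun r i => (s r * y r i) / s r) = y := by
        funext r i; exact mul_div_cancel_left₀ _ (hso r).ne'
      constructor
      · rintro ⟨hA', hO⟩
        refine ⟨by simpa [Set.mem_preimage, h1] using hA', fun r i => ?_⟩
        have := hO r i
        exact (mul_pos_iff_of_pos_left (hso r)).mp this
      · rintro ⟨hA', hO⟩
        exact ⟨by simpa [Set.mem_preimage, h1] using hA',
          fun r i => mul_pos (hso r) (hO r i)⟩
    by_cases hy : y ∈ A ∩ orthant k d
    · rw [hgdef, Set.indicator_of_mem (hmem.mpr hy), Set.indicator_of_mem hy]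
    · rw [hgdef, Set.indicator_of_notMem (fun h => hy (hmem.mp h)),
        Set.indicator_of_notMem hy]
  simp_rw [hgT]
  have hptwise : ∀ y : PiX k d,
      (A ∩ orthant k d).indicator
          (fun y => ENNReal.ofReal (W (fun r i => s r * y r i))) y
      ≤ ENNReal.ofReal (K * sPow s θ) *
          (A ∩ orthant k d).indicator (fun y => ENNReal.ofReal (W y)) y := by
    intro y
    by_cases hy : y ∈ A ∩ orthant k d
    · rw [Set.indicator_of_mem hy, Set.indicator_of_mem hy,
        ← ENNReal.ofReal_mul (mul_nonneg hK0 hsθnn)]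
      refine ENNReal.ofReal_le_ofReal ?_
      calc W (fun r i => s r * y r i) ≤ K * (sPow s θ * W y) := hK s hs1 y
        _ = K * sPow s θ * W y := by ring
    · rw [Set.indicator_of_notMem hy, Set.indicator_of_notMem hy, mul_zero]
  calc ENNReal.ofReal (∏ r, s r ^ d r) * ∫⁻ y : PiX k d,
        (A ∩ orthant k d).indicator
          (fun y => ENNReal.ofReal (W (fun r i => s r * y r i))) y
      ≤ ENNReal.ofReal (∏ r, s r ^ d r) * ∫⁻ y : PiX k d,
          ENNReal.ofReal (K * sPow s θ) *
            (A ∩ orthant k d).indicator (fun y => ENNReal.ofReal (W y)) y := by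
        exact mul_le_mul_right (lintegral_mono hptwise) _
    _ = ENNReal.ofReal (K * sPow s (fun r => (d r : ℝ) + θ r)) *
          ∫⁻ y : PiX k d, (A ∩ orthant k d).indicator
            (fun y => ENNReal.ofReal (W y)) y := by
        rw [lintegral_const_mul _
          ((hWmeas.ennreal_ofReal).indicator (hA.inter measurableSet_orthant)),
          ← mul_assoc, ← ENNReal.ofReal_mul
            (Finset.prod_nonneg fun r _ => (pow_pos (hso r) _).le)]
        congr 2
        have : sPow s (fun r => (d r : ℝ) + θ r)
            = (∏ r, s r ^ d r) * sPow s θ := by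
          rw [sPow, sPow, ← Finset.prod_mul_distrib]
          refine Finset.prod_congr rfl fun r _ => ?_
          rw [Real.rpow_add (hso r), Real.rpow_natCast]
        rw [this]; ring

lemma eLpNorm_dilate_le {k : ℕ} {d : Fin k → ℕ} (θ : Fin k → ℝ)
    (W : PiX k d → ℝ) (hWnn : ∀ x, 0 ≤ W x) (hWmeas : Measurable W)
    (K : ℝ) (hK0 : 0 ≤ K)
    (hK : ∀ s : Fin k → ℝ, (∀ r, 1 ≤ s r) → ∀ y : PiX k d,
      W (fun r i => s r * y r i) ≤ K * (sPow s θ * W y))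
    (s : Fin k → ℝ) (hs1 : ∀ r, 1 ≤ s r)
    (f : PiX k d → ℝ) (hf : AEStronglyMeasurable f (wMeasure k d W))
    (p : ℝ) (hp0 : 0 < p) :
    eLpNorm (dilate s f) (ENNReal.ofReal p) (wMeasure k d W)
      ≤ ENNReal.ofReal (K * sPow s (fun r => (d r : ℝ) + θ r)) ^ (1/p) *
          eLpNorm f (ENNReal.ofReal p) (wMeasure k d W) := by
  set μ := wMeasure k d W with hμdef
  set C := ENNReal.ofReal (K * sPow s (fun r => (d r : ℝ) + θ r)) with hCdef
  have hTinv : Measurable (fun (x : PiX k d) r i => x r i / s r) := measurable_scaleTinv s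
  have hmaple : μ.map (fun (x : PiX k d) r i => x r i / s r) ≤ C • μ :=
    map_dilate_le θ W hWnn hWmeas K hK0 hK s hs1
  have hac : μ.map (fun (x : PiX k d) r i => x r i / s r) ≪ μ :=
    (Measure.absolutelyContinuous_of_le hmaple).trans Measure.smul_absolutelyContinuous
  have hfm : AEStronglyMeasurable f (μ.map (fun (x : PiX k d) r i => x r i / s r)) :=
    hf.mono_ac hac
  have hexp : (1 / (ENNReal.ofReal p)).toReal = 1 / p := by
    rw [one_div, ENNReal.toReal_inv, ENNReal.toReal_ofReal hp0.le, one_div]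
  calc eLpNorm (dilate s f) (ENNReal.ofReal p) μ
      = eLpNorm f (ENNReal.ofReal p) (μ.map (fun (x : PiX k d) r i => x r i / s r)) :=
        (eLpNorm_map_measure hfm hTinv.aemeasurable).symm
    _ ≤ eLpNorm f (ENNReal.ofReal p) (C • μ) := eLpNorm_mono_measure f hmaple
    _ = C ^ (1/p) * eLpNorm f (ENNReal.ofReal p) μ := by
        rw [eLpNorm_smul_measure_of_ne_top ENNReal.ofReal_ne_top, smul_eq_mul, hexp]


/-- **Corollary to Theorem 2, part I.** Suppose the (not necessarily
homogeneous) weight `W` satisfies `W(s·y) ≤ K⁺_∞ · s^θ · W(y)` for all vectors `s` with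
`min_j s(j) ≥ 1` (i.e. `K⁺_∞ = sup W(s·y)/(s^θ W(y)) < ∞`). Let `ψ, ζ, ν ∈ EΨ(a,b)` with
`ζ = ψ·ν`. Then for every positive vector `s` with `min_j s(j) > 1`,
`‖σ_s‖(G(ψ) → G(ζ)) ≤ max{(K⁺_∞)^{1/a}, (K⁺_∞)^{1/b}} · φ(G(ν), s^{d+θ})`. -/
theorem dilation_opNorm_le_inhomogeneous
    (k : ℕ) (d : Fin k → ℕ) (θ : Fin k → ℝ)
    (W : PiX k d → ℝ) (hWnn : ∀ x, 0 ≤ W x) (hWmeas : Measurable W)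
    (K : ℝ) (hK0 : 0 ≤ K)
    (hK : ∀ s : Fin k → ℝ, (∀ r, 1 ≤ s r) → ∀ y : PiX k d,
      W (fun r i => s r * y r i) ≤ K * (sPow s θ * W y))
    (a : ℝ) (b : ℝ≥0∞) (ha : 1 ≤ a) (hab : ENNReal.ofReal a < b)
    (ψ ζ ν : ℝ → ℝ) (hψ : IsEPsi a b ψ) (hζ : IsEPsi a b ζ) (hν : IsEPsi a b ν)
    (hmul : ∀ p ∈ expSet a b, ζ p = ψ p * ν p)
    (s : Fin k → ℝ) (hs : ∀ r, 1 < s r) :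
    dilOpNorm (wMeasure k d W) a b ψ ζ s ≤
      ENNReal.ofReal (max (K ^ (1 / a)) (K ^ b⁻¹.toReal)) *
        fundE a b ν (ENNReal.ofReal (sPow s fun r => (d r : ℝ) + θ r)) := by
  set μ := wMeasure k d W with hμdef
  have hso : ∀ r, 0 < s r := fun r => lt_trans one_pos (hs r)
  have hs1 : ∀ r, 1 ≤ s r := fun r => (hs r).le
  set Sd : ℝ := sPow s (fun r => (d r : ℝ) + θ r) with hSddef
  have hSdpos : 0 < Sd := Finset.prod_pos fun r _ => Real.rpow_pos_of_pos (hso r) _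
  set M : ℝ≥0∞ := ENNReal.ofReal (max (K ^ (1 / a)) (K ^ b⁻¹.toReal)) with hMdef
  set Φ : ℝ≥0∞ := fundE a b ν (ENNReal.ofReal Sd) with hΦdef
  have ha0 : (0:ℝ) < a := lt_of_lt_of_le one_pos ha
  rw [dilOpNorm]
  refine iSup_le fun f => ENNReal.div_le_of_le_mul ?_
  rw [GNorm]
  refine iSup₂_le fun p hp => ?_
  obtain ⟨hap, hpb⟩ := hp
  have hp0 : (0:ℝ) < p := lt_trans ha0 hap
  have h1p : (0:ℝ) < 1/p := by positivity
  set X := eLpNorm f.1 (ENNReal.ofReal p) μ with hXdef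
  have hψ1 : (1:ℝ) ≤ ψ p := hψ.2.1 p ⟨hap, hpb⟩
  have hν1 : (1:ℝ) ≤ ν p := hν.2.1 p ⟨hap, hpb⟩
  have hζsplit : ENNReal.ofReal (ζ p) = ENNReal.ofReal (ψ p) * ENNReal.ofReal (ν p) := by
    rw [hmul p ⟨hap, hpb⟩, ENNReal.ofReal_mul (le_trans zero_le_one hψ1)]
  have hψ0 : ENNReal.ofReal (ψ p) ≠ 0 :=
    (ENNReal.ofReal_pos.mpr (lt_of_lt_of_le one_pos hψ1)).ne'
  -- the key eLpNorm bound
  have hel : eLpNorm (dilate s f.1) (ENNReal.ofReal p) μ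
      ≤ ENNReal.ofReal K ^ (1/p) * (ENNReal.ofReal Sd ^ (1/p) * X) := by
    have := eLpNorm_dilate_le θ W hWnn hWmeas K hK0 hK s hs1 f.1 f.2 p hp0
    calc eLpNorm (dilate s f.1) (ENNReal.ofReal p) μ
        ≤ ENNReal.ofReal (K * Sd) ^ (1/p) * X := this
      _ = ENNReal.ofReal K ^ (1/p) * (ENNReal.ofReal Sd ^ (1/p) * X) := by
          rw [ENNReal.ofReal_mul hK0, ENNReal.mul_rpow_of_nonneg _ _ h1p.le, mul_assoc]
  -- bound on the K-factor
  have hKfac : ENNReal.ofReal K ^ (1/p) ≤ M := by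
    rw [ENNReal.ofReal_rpow_of_nonneg hK0 h1p.le]
    refine ENNReal.ofReal_le_ofReal ?_
    have h1pa : 1/p ≤ 1/a := one_div_le_one_div_of_le ha0 hap.le
    have hbinv : b⁻¹.toReal ≤ 1/p := by
      have h1 : b⁻¹ ≤ (ENNReal.ofReal p)⁻¹ := ENNReal.inv_le_inv.mpr hpb.le
      have hne : (ENNReal.ofReal p)⁻¹ ≠ ⊤ :=
        ENNReal.inv_ne_top.mpr (ENNReal.ofReal_pos.mpr hp0).ne'
      have := ENNReal.toReal_mono hne h1
      rw [ENNReal.toReal_inv, ENNReal.toReal_inv, ENNReal.toReal_ofReal hp0.le] at this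
      rw [ENNReal.toReal_inv, one_div]
      exact this
    rcases le_or_gt 1 K with h1K | hK1
    · exact le_max_of_le_left (Real.rpow_le_rpow_of_exponent_le h1K h1pa)
    · rcases eq_or_lt_of_le hK0 with h0 | h0
      · rw [← h0, Real.zero_rpow h1p.ne']
        exact le_max_of_le_left (Real.rpow_nonneg le_rfl _)
      · exact le_max_of_le_right (Real.rpow_le_rpow_of_exponent_ge h0 hK1.le hbinv)
  -- bound on the ν-factor
  have hνfac : ENNReal.ofReal Sd ^ (1/p) / ENNReal.ofReal (ν p) ≤ Φ := by
    rw [hΦdef, fundE]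
    exact le_iSup₂ (f := fun q (_ : q ∈ expSet a b) =>
      ENNReal.ofReal Sd ^ (1/q) / ENNReal.ofReal (ν q)) p ⟨hap, hpb⟩
  -- bound on the ψ-factor
  have hψfac : X / ENNReal.ofReal (ψ p) ≤ GNorm μ a b ψ f.1 := by
    rw [GNorm]
    exact le_iSup₂ (f := fun q (_ : q ∈ expSet a b) =>
      eLpNorm f.1 (ENNReal.ofReal q) μ / ENNReal.ofReal (ψ q)) p ⟨hap, hpb⟩
  calc eLpNorm (dilate s f.1) (ENNReal.ofReal p) μ / ENNReal.ofReal (ζ p)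
      ≤ (ENNReal.ofReal K ^ (1/p) * (ENNReal.ofReal Sd ^ (1/p) * X))
          / (ENNReal.ofReal (ψ p) * ENNReal.ofReal (ν p)) := by
        rw [hζsplit]
        exact ENNReal.div_le_div_right hel _
    _ = ENNReal.ofReal K ^ (1/p) * ((ENNReal.ofReal Sd ^ (1/p) / ENNReal.ofReal (ν p))
          * (X / ENNReal.ofReal (ψ p))) := by
        simp only [div_eq_mul_inv]
        rw [ENNReal.mul_inv (Or.inl hψ0) (Or.inl ENNReal.ofReal_ne_top)]
        ring
    _ ≤ M * (Φ * GNorm μ a b ψ f.1) :=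
        mul_le_mul' hKfac (mul_le_mul' hνfac hψfac)
    _ = M * Φ * GNorm μ a b ψ f.1 := by rw [mul_assoc]
end
end

section
/- (Corollary to Theorem 2, part II) Suppose the weight W on X satisfies K⁻_∞ := inf over positive vectors s with min_j s(j) ≥ 1 and y ∈ X of W(s·y)/(s^θ W(y)) (where s·y denotes coordinate-wise scaling and s^θ = ∏_r s(r)^{θ(r)}) is finite and positive. Let ψ ∈ Ψ(a,b) and ζ, ν ∈ EΨ(a,b) with ζ = ψ·ν. Then for every positive vector s with min_j s(j) > 1, ‖σ_s‖(G(ψ) → G(ζ)) ≥ min{(K⁻_∞)^{1/a}, (K⁻_∞)^{1/b}} · φ(G(ν), s^{d+θ}). -/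
noncomputable section

open MeasureTheory Filter Set Topology
open scoped ENNReal NNReal

lemma pi_smul {ι : Type*} [Fintype ι] {α : ι → Type*} [∀ i, MeasurableSpace (α i)]
    (μ : ∀ i, Measure (α i)) [∀ i, SigmaFinite (μ i)] (c : ι → ℝ≥0) :
    Measure.pi (fun i => c i • μ i) = (∏ i, c i) • Measure.pi μ := by
  refine Measure.pi_eq (μ := fun i => c i • μ i) fun s hs => ?_
  rw [Measure.smul_apply, Measure.pi_pi, ENNReal.smul_def, smul_eq_mul, ENNReal.coe_finset_prod,
    ← Finset.prod_mul_distrib]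
  simp only [Measure.smul_apply, ENNReal.smul_def, smul_eq_mul]

lemma mp_dilate {k : ℕ} {d : Fin k → ℕ} (s : Fin k → ℝ) (hs : ∀ r, 0 < s r) :
    MeasurePreserving (fun (y : PiX k d) r i => s r * y r i)
      ((∏ r, Real.toNNReal (s r ^ d r)) • volume) volume := by
  have mp : ∀ r : Fin k, MeasurePreserving (fun y : Fin (d r) → ℝ => s r • y)
      (Real.toNNReal (s r ^ d r) • volume) volume := by
    intro r
    constructor
    · exact measurable_const_smul _
    · rw [Measure.map_smul, Measure.map_addHaar_smul volume (hs r).ne']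
      have hfr : Module.finrank ℝ (Fin (d r) → ℝ) = d r := by simp
      rw [hfr, abs_of_pos (inv_pos.mpr (pow_pos (hs r) _)),
        ENNReal.ofReal_inv_of_pos (pow_pos (hs r) _)]
      rw [ENNReal.smul_def, smul_smul]
      have : (Real.toNNReal (s r ^ d r) : ℝ≥0∞) = ENNReal.ofReal (s r ^ d r) := rfl
      rw [this, ENNReal.mul_inv_cancel (by simp [ENNReal.ofReal_pos.mpr (pow_pos (hs r) _), (ENNReal.ofReal_pos.mpr (pow_pos (hs r) _)).ne']) ENNReal.ofReal_ne_top, one_smul]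
  have h := measurePreserving_pi (fun r : Fin k => Real.toNNReal (s r ^ d r) • volume)
      (fun r : Fin k => (volume : Measure (Fin (d r) → ℝ))) mp
  rw [pi_smul] at h
  have hv : (volume : Measure (PiX k d)) = Measure.pi fun _ => volume := volume_pi
  rw [hv]
  exact h

lemma lintegral_dilate {k : ℕ} {d : Fin k → ℕ} (s : Fin k → ℝ) (hs : ∀ r, 0 < s r)
    (h : PiX k d → ℝ≥0∞) (hh : Measurable h) :
    ∫⁻ x, h x ∂(volume : Measure (PiX k d)) =
      ENNReal.ofReal (∏ r, s r ^ d r) *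
        ∫⁻ y, h (fun r i => s r * y r i) ∂(volume : Measure (PiX k d)) := by
  rw [← (mp_dilate s hs (d := d)).lintegral_comp hh, ENNReal.smul_def,
    lintegral_smul_measure]
  congr 1
  rw [ENNReal.ofReal_prod_of_nonneg (fun r _ => (pow_pos (hs r) _).le),
    ENNReal.coe_finset_prod]
  rfl

lemma orthant_measurable (k : ℕ) (d : Fin k → ℕ) : MeasurableSet (orthant k d) := by
  have : orthant k d = ⋂ r, ⋂ i, {x : PiX k d | 0 < x r i} := by
    ext x; simp [orthant]
  rw [this]
  exact MeasurableSet.iInter fun r => MeasurableSet.iInter fun i =>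
    measurableSet_lt measurable_const ((measurable_pi_apply i).comp (measurable_pi_apply r))

lemma mem_orthant_dilate {k : ℕ} {d : Fin k → ℕ} {s : Fin k → ℝ} (hs : ∀ r, 0 < s r)
    (y : PiX k d) : ((fun r i => s r * y r i) ∈ orthant k d) ↔ y ∈ orthant k d := by
  simp only [orthant, mem_setOf_eq]
  constructor
  · intro h r i; nlinarith [h r i, hs r]
  · intro h r i; exact mul_pos (hs r) (h r i)

lemma key_lintegral {k : ℕ} {d : Fin k → ℕ} (θ : Fin k → ℝ)
    (W : PiX k d → ℝ) (hWmeas : Measurable W)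
    (K : ℝ) (hK0 : 0 < K)
    (hK : ∀ s : Fin k → ℝ, (∀ r, 1 ≤ s r) → ∀ y : PiX k d,
      K * (sPow s θ * W y) ≤ W (fun r i => s r * y r i))
    (s : Fin k → ℝ) (hs : ∀ r, 1 < s r)
    (g : PiX k d → ℝ) (hg : Measurable g) (p : ℝ) (hp : 0 < p) :
    ENNReal.ofReal (K * sPow s (fun r => (d r : ℝ) + θ r)) *
        ∫⁻ y, (‖g y‖₊ : ℝ≥0∞) ^ p ∂(wMeasure k d W) ≤
      ∫⁻ x, (‖dilate s g x‖₊ : ℝ≥0∞) ^ p ∂(wMeasure k d W) := by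
  have hs0 : ∀ r, 0 < s r := fun r => lt_trans one_pos (hs r)
  have hKpos : 0 < sPow s θ :=
    Finset.prod_pos fun r _ => Real.rpow_pos_of_pos (lt_trans one_pos (hs r)) _
  set w : PiX k d → ℝ≥0∞ := fun x => ENNReal.ofReal (W x) with hw
  have hwm : Measurable w := hWmeas.ennreal_ofReal
  set O := orthant k d
  have hO : MeasurableSet O := orthant_measurable k d
  -- measurability of various functions
  have hinv : Measurable fun x : PiX k d => (fun r i => x r i / s r : PiX k d) := by
    apply measurable_pi_lambda
    intro r
    apply measurable_pi_lambda
    intro i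
    exact ((measurable_pi_apply i).comp (measurable_pi_apply r)).div_const _
  have hdg : Measurable (dilate s g) := hg.comp hinv
  have hgp : Measurable fun y : PiX k d => (‖g y‖₊ : ℝ≥0∞) ^ p :=
    (hg.nnnorm.coe_nnreal_ennreal).pow_const p
  have hdgp : Measurable fun x : PiX k d => (‖dilate s g x‖₊ : ℝ≥0∞) ^ p :=
    (hdg.nnnorm.coe_nnreal_ennreal).pow_const p
  -- unfold the weighted measure
  have unfold : ∀ (F : PiX k d → ℝ≥0∞), Measurable F →
      ∫⁻ x, F x ∂(wMeasure k d W) = ∫⁻ x, O.indicator (fun x => w x * F x) x := by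
    intro F hF
    rw [wMeasure, lintegral_withDensity_eq_lintegral_mul _ hwm hF, ← lintegral_indicator hO]
    rfl
  rw [unfold _ hgp, unfold _ hdgp]
  -- change of variables on the RHS
  have hind : Measurable (O.indicator fun x => w x * (‖dilate s g x‖₊ : ℝ≥0∞) ^ p) :=
    (hwm.mul hdgp).indicator hO
  rw [lintegral_dilate s hs0 _ hind]
  -- pointwise computation of the composed integrand
  have hcomp : ∀ y : PiX k d,
      (O.indicator fun x => w x * (‖dilate s g x‖₊ : ℝ≥0∞) ^ p) (fun r i => s r * y r i)
        = O.indicator (fun y => w (fun r i => s r * y r i) * (‖g y‖₊ : ℝ≥0∞) ^ p) y := by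
    intro y
    have hdil : dilate s g (fun r i => s r * y r i) = g y := by
      unfold dilate
      congr 1
      funext r i
      exact mul_div_cancel_left₀ (y r i) (hs0 r).ne'
    by_cases hy : y ∈ O
    · rw [indicator_of_mem ((mem_orthant_dilate hs0 y).mpr hy), indicator_of_mem hy, hdil]
    · rw [indicator_of_notMem (fun h => hy ((mem_orthant_dilate hs0 y).mp h)),
        indicator_of_notMem hy]
  simp only [hcomp]
  -- lower bound the weight
  have hbound : ∀ y : PiX k d,
      O.indicator (fun y => ENNReal.ofReal (K * sPow s θ) * (w y * (‖g y‖₊ : ℝ≥0∞) ^ p)) y ≤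
        O.indicator (fun y => w (fun r i => s r * y r i) * (‖g y‖₊ : ℝ≥0∞) ^ p) y := by
    intro y
    apply indicator_le_indicator
    have h1 : ENNReal.ofReal (K * sPow s θ) * w y ≤ w (fun r i => s r * y r i) := by
      rw [hw, ← ENNReal.ofReal_mul (mul_nonneg hK0.le hKpos.le), mul_assoc]
      exact ENNReal.ofReal_le_ofReal (hK s (fun r => (hs r).le) y)
    calc ENNReal.ofReal (K * sPow s θ) * (w y * (‖g y‖₊ : ℝ≥0∞) ^ p)
        = (ENNReal.ofReal (K * sPow s θ) * w y) * (‖g y‖₊ : ℝ≥0∞) ^ p := by ring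
      _ ≤ _ := mul_le_mul_left h1 _
  calc ENNReal.ofReal (K * sPow s (fun r => (d r : ℝ) + θ r)) *
        ∫⁻ x, O.indicator (fun x => w x * (‖g x‖₊ : ℝ≥0∞) ^ p) x
      = ENNReal.ofReal (∏ r, s r ^ d r) *
          ∫⁻ y, O.indicator
            (fun y => ENNReal.ofReal (K * sPow s θ) * (w y * (‖g y‖₊ : ℝ≥0∞) ^ p)) y := by
        rw [lintegral_indicator hO, lintegral_indicator hO, lintegral_const_mul _ (f := fun y => w y * (‖g y‖₊ : ℝ≥0∞) ^ p) (hwm.mul hgp),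
          ← mul_assoc, ← ENNReal.ofReal_mul (Finset.prod_nonneg fun r _ => pow_nonneg (hs0 r).le _)]
        congr 2
        have : sPow s (fun r => (d r : ℝ) + θ r) = (∏ r, s r ^ d r) * sPow s θ := by
          rw [sPow, sPow, ← Finset.prod_mul_distrib]
          refine Finset.prod_congr rfl fun r _ => ?_
          rw [Real.rpow_add (hs0 r), Real.rpow_natCast]
        rw [this]; ring
    _ ≤ ENNReal.ofReal (∏ r, s r ^ d r) *
          ∫⁻ y, O.indicator
            (fun y => w (fun r i => s r * y r i) * (‖g y‖₊ : ℝ≥0∞) ^ p) y := by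
        exact mul_le_mul_right (lintegral_mono hbound) _

section MainAux

open ENNReal in
lemma min_rpow_le {K : ℝ} (hK0 : 0 < K) {a p : ℝ} {b : ℝ≥0∞} (ha : 1 ≤ a)
    (hap : a < p) (hpb : ENNReal.ofReal p < b) :
    min (K ^ (1 / a)) (K ^ b⁻¹.toReal) ≤ K ^ (1 / p) := by
  have ha0 : 0 < a := lt_of_lt_of_le one_pos ha
  have hp0 : 0 < p := lt_trans ha0 hap
  have h1 : 1 / p ≤ 1 / a := by
    rw [one_div, one_div]
    exact inv_anti₀ ha0 hap.le
  have h2 : b⁻¹.toReal ≤ 1 / p := by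
    rcases eq_or_ne b ⊤ with hb | hb
    · simp [hb]
      positivity
    · rw [ENNReal.toReal_inv]
      have hpb' : p < b.toReal := (ENNReal.ofReal_lt_iff_lt_toReal hp0.le hb).mp hpb
      rw [one_div]
      exact inv_anti₀ hp0 hpb'.le
  rcases le_total 1 K with hK1 | hK1
  · exact le_trans (min_le_right _ _) (Real.rpow_le_rpow_of_exponent_le hK1 h2)
  · exact le_trans (min_le_left _ _) (Real.rpow_le_rpow_of_exponent_ge hK0 hK1 h1)

end MainAux

/-- **Corollary to Theorem 2, part II.** Suppose the (not necessarily
homogeneous) weight `W` satisfies `K⁻_∞ · s^θ · W(y) ≤ W(s·y)` for all vectors `s` with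
`min_j s(j) ≥ 1`, where `K⁻_∞` (the infimum of the ratios `W(s·y)/(s^θ W(y))`) is finite
and positive. Let `ψ ∈ Ψ(a,b)` and `ζ, ν ∈ EΨ(a,b)` with `ζ = ψ·ν`. Then for every
positive vector `s` with `min_j s(j) > 1`,
`‖σ_s‖(G(ψ) → G(ζ)) ≥ min{(K⁻_∞)^{1/a}, (K⁻_∞)^{1/b}} · φ(G(ν), s^{d+θ})`. -/
theorem dilation_opNorm_ge_inhomogeneous
    (k : ℕ) (d : Fin k → ℕ) (θ : Fin k → ℝ)
    (W : PiX k d → ℝ) (hWnn : ∀ x, 0 ≤ W x) (hWmeas : Measurable W)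
    (K : ℝ) (hK0 : 0 < K)
    (hK : ∀ s : Fin k → ℝ, (∀ r, 1 ≤ s r) → ∀ y : PiX k d,
      K * (sPow s θ * W y) ≤ W (fun r i => s r * y r i))
    (a : ℝ) (b : ℝ≥0∞) (ha : 1 ≤ a) (hab : ENNReal.ofReal a < b)
    (ψ ζ ν : ℝ → ℝ) (hψ : IsPsi (wMeasure k d W) a b ψ)
    (hζ : IsEPsi a b ζ) (hν : IsEPsi a b ν)
    (hmul : ∀ p ∈ expSet a b, ζ p = ψ p * ν p)
    (s : Fin k → ℝ) (hs : ∀ r, 1 < s r) :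
    ENNReal.ofReal (min (K ^ (1 / a)) (K ^ b⁻¹.toReal)) *
        fundE a b ν (ENNReal.ofReal (sPow s fun r => (d r : ℝ) + θ r)) ≤
      dilOpNorm (wMeasure k d W) a b ψ ζ s := by
  classical
  obtain ⟨hψc, hψpos, hψtend, f, hf, hfrep⟩ := hψ
  set μ := wMeasure k d W with hμ
  -- replace f by a measurable representative g
  set g : PiX k d → ℝ := hf.mk f with hg
  have hgm : Measurable g := hf.stronglyMeasurable_mk.measurable
  have hgrep : ∀ p ∈ expSet a b, eLpNorm g (ENNReal.ofReal p) μ = ENNReal.ofReal (ψ p) := by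
    intro p hp
    rw [← eLpNorm_congr_ae hf.ae_eq_mk]
    exact hfrep p hp
  have hs0 : ∀ r, 0 < s r := fun r => lt_trans one_pos (hs r)
  -- nonemptiness of the exponent set
  have hne : (expSet a b).Nonempty := by
    rcases eq_or_ne b ⊤ with hb | hb
    · exact ⟨a + 1, by simp [expSet, hb]⟩
    · have hab' : a < b.toReal :=
        (ENNReal.ofReal_lt_iff_lt_toReal (le_trans zero_le_one ha) hb).mp hab
      refine ⟨(a + b.toReal) / 2, ⟨by linarith, ?_⟩⟩
      rw [ENNReal.ofReal_lt_iff_lt_toReal (by linarith) hb]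
      linarith
  -- GNorm of g w.r.t. ψ equals 1
  have hGψ : GNorm μ a b ψ g = 1 := by
    rw [GNorm]
    have : ∀ p ∈ expSet a b,
        eLpNorm g (ENNReal.ofReal p) μ / ENNReal.ofReal (ψ p) = 1 := by
      intro p hp
      rw [hgrep p hp]
      exact ENNReal.div_self (ENNReal.ofReal_pos.mpr (hψpos p hp)).ne' ENNReal.ofReal_ne_top
    calc (⨆ p ∈ expSet a b, eLpNorm g (ENNReal.ofReal p) μ / ENNReal.ofReal (ψ p))
        = ⨆ p ∈ expSet a b, (1 : ℝ≥0∞) :=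
          iSup_congr fun p => iSup_congr fun hp => this p hp
      _ = 1 := biSup_const hne
  -- the dilation lower bound on Lᵖ norms
  set S : ℝ := sPow s fun r => (d r : ℝ) + θ r with hS
  have hSpos : 0 < S :=
    Finset.prod_pos fun r _ => Real.rpow_pos_of_pos (hs0 r) _
  have hlow : ∀ p ∈ expSet a b,
      ENNReal.ofReal K ^ (1 / p) * ENNReal.ofReal S ^ (1 / p) * ENNReal.ofReal (ψ p) ≤
        eLpNorm (dilate s g) (ENNReal.ofReal p) μ := by
    intro p hp
    have hp0 : 0 < p := lt_of_le_of_lt (le_trans zero_le_one ha) hp.1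
    have hpne : ENNReal.ofReal p ≠ 0 := (ENNReal.ofReal_pos.mpr hp0).ne'
    have key := key_lintegral θ W hWmeas K hK0 hK s hs g hgm p hp0
    rw [eLpNorm_eq_lintegral_rpow_enorm_toReal hpne ENNReal.ofReal_ne_top,
      ENNReal.toReal_ofReal hp0.le]
    simp only [enorm_eq_nnnorm]
    have h1 : (ENNReal.ofReal (K * S) * ∫⁻ y, (‖g y‖₊ : ℝ≥0∞) ^ p ∂μ) ^ (1 / p) ≤
        (∫⁻ x, (‖dilate s g x‖₊ : ℝ≥0∞) ^ p ∂μ) ^ (1 / p) :=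
      ENNReal.rpow_le_rpow key (by positivity)
    refine le_trans (le_of_eq ?_) h1
    rw [ENNReal.mul_rpow_of_nonneg _ _ (by positivity : (0:ℝ) ≤ 1 / p),
      ENNReal.ofReal_mul hK0.le,
      ENNReal.mul_rpow_of_nonneg _ _ (by positivity : (0:ℝ) ≤ 1 / p)]
    congr 1
    have : (∫⁻ y, (‖g y‖₊ : ℝ≥0∞) ^ p ∂μ) = ENNReal.ofReal (ψ p) ^ p := by
      have := hgrep p hp
      rw [eLpNorm_eq_lintegral_rpow_enorm_toReal hpne ENNReal.ofReal_ne_top,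
        ENNReal.toReal_ofReal hp0.le] at this
      simp only [enorm_eq_nnnorm] at this
      calc (∫⁻ y, (‖g y‖₊ : ℝ≥0∞) ^ p ∂μ)
          = ((∫⁻ y, (‖g y‖₊ : ℝ≥0∞) ^ p ∂μ) ^ (1 / p)) ^ p := by
            rw [← ENNReal.rpow_mul, one_div, inv_mul_cancel₀ hp0.ne', ENNReal.rpow_one]
        _ = ENNReal.ofReal (ψ p) ^ p := by rw [this]
    rw [this, ← ENNReal.rpow_mul, mul_one_div, div_self hp0.ne', ENNReal.rpow_one]
  -- main estimate: GNorm of the dilated function w.r.t. ζ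
  have hGζ : ENNReal.ofReal (min (K ^ (1 / a)) (K ^ b⁻¹.toReal)) *
      fundE a b ν (ENNReal.ofReal S) ≤ GNorm μ a b ζ (dilate s g) := by
    rw [fundE]
    simp_rw [ENNReal.mul_iSup]
    refine iSup₂_le fun p hp => ?_
    have hp0 : 0 < p := lt_of_le_of_lt (le_trans zero_le_one ha) hp.1
    have hψp : 0 < ψ p := hψpos p hp
    have hνp : 0 < ν p := lt_of_lt_of_le one_pos (hν.2.1 p hp)
    have hstep1 : ENNReal.ofReal (min (K ^ (1 / a)) (K ^ b⁻¹.toReal)) *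
        (ENNReal.ofReal S ^ (1 / p) / ENNReal.ofReal (ν p)) ≤
          ENNReal.ofReal K ^ (1 / p) * ENNReal.ofReal S ^ (1 / p) /
            ENNReal.ofReal (ν p) := by
      rw [← mul_div_assoc]
      gcongr
      rw [ENNReal.ofReal_rpow_of_pos hK0]
      exact ENNReal.ofReal_le_ofReal (min_rpow_le hK0 ha hp.1 hp.2)
    refine le_trans hstep1 ?_
    have hζp : ENNReal.ofReal (ζ p) = ENNReal.ofReal (ψ p) * ENNReal.ofReal (ν p) := by
      rw [hmul p hp, ENNReal.ofReal_mul hψp.le]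
    have hstep2 : ENNReal.ofReal K ^ (1 / p) * ENNReal.ofReal S ^ (1 / p) /
        ENNReal.ofReal (ν p) ≤
          eLpNorm (dilate s g) (ENNReal.ofReal p) μ / ENNReal.ofReal (ζ p) := by
      rw [hζp]
      have : ENNReal.ofReal K ^ (1 / p) * ENNReal.ofReal S ^ (1 / p) /
          ENNReal.ofReal (ν p) =
            ENNReal.ofReal (ψ p) *
              (ENNReal.ofReal K ^ (1 / p) * ENNReal.ofReal S ^ (1 / p)) /
              (ENNReal.ofReal (ψ p) * ENNReal.ofReal (ν p)) := by
        rw [ENNReal.mul_div_mul_left _ _ (ENNReal.ofReal_pos.mpr hψp).ne'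
          ENNReal.ofReal_ne_top]
      rw [this]
      gcongr
      calc ENNReal.ofReal (ψ p) *
            (ENNReal.ofReal K ^ (1 / p) * ENNReal.ofReal S ^ (1 / p))
          = ENNReal.ofReal K ^ (1 / p) * ENNReal.ofReal S ^ (1 / p) *
              ENNReal.ofReal (ψ p) := by ring
        _ ≤ _ := hlow p hp
    refine le_trans hstep2 ?_
    rw [GNorm]
    exact le_iSup₂_of_le p hp le_rfl
  -- conclude via the definition of the operator norm
  have hmem : AEStronglyMeasurable g μ := hgm.aestronglyMeasurable
  have : GNorm μ a b ζ (dilate s g) ≤ dilOpNorm μ a b ψ ζ s := by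
    have h := le_iSup (fun f : {f : PiX k d → ℝ // AEStronglyMeasurable f μ} =>
      GNorm μ a b ζ (dilate s f.1) / GNorm μ a b ψ f.1) ⟨g, hmem⟩
    simpa [hGψ, dilOpNorm] using h
  exact le_trans hGζ this
end
end
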